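/- Let P and Q be Borel probability measures on ℝ, let B_0 = (−1,1], B_m = (−2^m, 2^m] \ (−2^{m−1}, 2^{m−1}] for m ≥ 1, and for each m let 𝓡_{B_m}P be the pushforward of the normalized restriction P|_{B_m}/P(B_m) under x ↦ x/2^m (defined when P(B_m) > 0). Then for every p ≥ 1, W_p^p(P,Q) ≤ Σ_{m≥0} 2^{mp} [ 2^{p−1} |P(B_m) − Q(B_m)| + (P(B_m) ∧ Q(B_m)) · W_p^p(𝓡_{B_m}P, 𝓡_{B_m}Q) ]. -/

import Mathlib

open MeasureTheory ENNReal

/-- `WpPow p P Q`: the `p`-th power of the order-`p` Wasserstein distance,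
as the infimum over couplings of `∫ |x-y|^p dπ`. -/
noncomputable def WpPow (p : ℝ) (P Q : Measure ℝ) : ℝ≥0∞ :=
  ⨅ (π : Measure (ℝ × ℝ)) (_ : π.map Prod.fst = P) (_ : π.map Prod.snd = Q),
    ∫⁻ z, ENNReal.ofReal (|z.1 - z.2| ^ p) ∂π

/-- Dyadic annuli: `B 0 = (-1,1]`, `B m = (-2^m,2^m] \ (-2^(m-1),2^(m-1)]`. -/
def dyadicB : ℕ → Set ℝ
  | 0 => Set.Ioc (-1) 1
  | (m + 1) => Set.Ioc (-(2 : ℝ) ^ (m + 1)) ((2 : ℝ) ^ (m + 1)) \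
      Set.Ioc (-(2 : ℝ) ^ m) ((2 : ℝ) ^ m)

/-- `𝓡_{B_m} P`: the pushforward under `x ↦ x / 2^m` of the normalized
restriction of `P` to `B_m`. -/
noncomputable def rescaledRestrict (m : ℕ) (P : Measure ℝ) : Measure ℝ :=
  Measure.map (fun x => x / (2 : ℝ) ^ m) ((P (dyadicB m))⁻¹ • P.restrict (dyadicB m))

lemma measurableSet_dyadicB (m : ℕ) : MeasurableSet (dyadicB m) := by
  cases m with
  | zero => exact measurableSet_Ioc
  | succ n => exact measurableSet_Ioc.diff measurableSet_Ioc

lemma dyadicB_subset (m : ℕ) : dyadicB m ⊆ Set.Ioc (-(2:ℝ)^m) ((2:ℝ)^m) := by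
  cases m with
  | zero => simp [dyadicB]
  | succ n => exact Set.diff_subset

lemma abs_le_of_mem_dyadicB {m : ℕ} {x : ℝ} (hx : x ∈ dyadicB m) : |x| ≤ (2:ℝ)^m := by
  have h := dyadicB_subset m hx
  rw [abs_le]; exact ⟨(h.1).le, h.2⟩

lemma pairwise_disjoint_dyadicB : Pairwise (Function.onFun Disjoint dyadicB) := by
  have hsub : ∀ m n : ℕ, m < n → dyadicB m ⊆ Set.Ioc (-(2:ℝ)^(n-1)) ((2:ℝ)^(n-1)) := by
    intro m n hmn
    refine (dyadicB_subset m).trans (Set.Ioc_subset_Ioc ?_ ?_)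
    · simp only [neg_le_neg_iff]
      exact pow_le_pow_right₀ (by norm_num) (by omega)
    · exact pow_le_pow_right₀ (by norm_num) (by omega)
  have key : ∀ m n : ℕ, m < n → Disjoint (dyadicB m) (dyadicB n) := by
    intro m n hmn
    refine Set.disjoint_left.2 fun x hxm hxn => ?_
    obtain ⟨k, rfl⟩ : ∃ k, n = k + 1 := ⟨n - 1, by omega⟩
    have h1 : x ∈ Set.Ioc (-(2:ℝ)^k) ((2:ℝ)^k) := by
      have := hsub m (k+1) hmn
      simpa using this hxm
    exact hxn.2 h1
  intro m n hmn
  rcases lt_or_gt_of_ne hmn with h | h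
  · exact key m n h
  · exact (key n m h).symm

lemma iUnion_dyadicB : (⋃ m, dyadicB m) = Set.univ := by
  refine Set.eq_univ_of_forall fun x => ?_
  have hex : ∃ n : ℕ, x ∈ Set.Ioc (-(2:ℝ)^n) ((2:ℝ)^n) := by
    obtain ⟨n, hn⟩ := pow_unbounded_of_one_lt |x| (by norm_num : (1:ℝ) < 2)
    rw [abs_lt] at hn
    exact ⟨n, by linarith [hn.1], hn.2.le⟩
  classical
  set k := Nat.find hex with hk
  have hmem : x ∈ Set.Ioc (-(2:ℝ)^k) ((2:ℝ)^k) := Nat.find_spec hex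
  refine Set.mem_iUnion.2 ⟨k, ?_⟩
  cases hkc : k with
  | zero =>
    rw [hkc] at hmem
    simpa [dyadicB] using hmem
  | succ j =>
    have hnot : x ∉ Set.Ioc (-(2:ℝ)^j) ((2:ℝ)^j) := by
      have := Nat.find_min hex (m := j) (by omega)
      exact this
    rw [hkc] at hmem
    exact ⟨hmem, hnot⟩

lemma measurable_cost {p : ℝ} (hp0 : 0 ≤ p) :
    Measurable fun z : ℝ × ℝ => ENNReal.ofReal (|z.1 - z.2| ^ p) :=
  (((continuous_abs.comp (continuous_fst.sub continuous_snd)).rpow_const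
    (fun _ => Or.inr hp0)).measurable).ennreal_ofReal

lemma WpPow_le_coupling (p : ℝ) {P Q : Measure ℝ} (π : Measure (ℝ × ℝ))
    (h1 : π.map Prod.fst = P) (h2 : π.map Prod.snd = Q) :
    WpPow p P Q ≤ ∫⁻ z, ENNReal.ofReal (|z.1 - z.2| ^ p) ∂π :=
  iInf_le_of_le π (iInf_le_of_le h1 (iInf_le _ h2))

lemma cost_pointwise_le {p : ℝ} (hp : 1 ≤ p) (x y : ℝ) :
    ENNReal.ofReal (|x - y| ^ p) ≤ ENNReal.ofReal ((2:ℝ) ^ (p - 1)) *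
      (ENNReal.ofReal (|x| ^ p) + ENNReal.ofReal (|y| ^ p)) := by
  have hp0 : (0:ℝ) ≤ p := le_trans zero_le_one hp
  rw [← ENNReal.ofReal_rpow_of_nonneg (abs_nonneg (x-y)) hp0,
    ← ENNReal.ofReal_rpow_of_nonneg (abs_nonneg x) hp0,
    ← ENNReal.ofReal_rpow_of_nonneg (abs_nonneg y) hp0,
    ← ENNReal.ofReal_rpow_of_pos (by norm_num : (0:ℝ) < 2)]
  have h1 : ENNReal.ofReal |x - y| ≤ ENNReal.ofReal |x| + ENNReal.ofReal |y| := by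
    rw [← ENNReal.ofReal_add (abs_nonneg _) (abs_nonneg _)]
    exact ENNReal.ofReal_le_ofReal (abs_sub _ _)
  calc ENNReal.ofReal |x - y| ^ p ≤ (ENNReal.ofReal |x| + ENNReal.ofReal |y|) ^ p :=
        ENNReal.rpow_le_rpow h1 hp0
    _ ≤ (ENNReal.ofReal 2) ^ (p - 1) * (ENNReal.ofReal |x| ^ p + ENNReal.ofReal |y| ^ p) := by
        simpa using ENNReal.rpow_add_le_mul_rpow_add_rpow (ENNReal.ofReal |x|) (ENNReal.ofReal |y|) hp

lemma cost_scale {p : ℝ} (hp : 1 ≤ p) (m : ℕ) (a b : ℝ) :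
    ENNReal.ofReal (|(2:ℝ)^m * a - (2:ℝ)^m * b| ^ p)
      = ENNReal.ofReal ((2:ℝ) ^ ((m:ℝ) * p)) * ENNReal.ofReal (|a - b| ^ p) := by
  have h2 : (0:ℝ) ≤ (2:ℝ)^m := by positivity
  rw [← mul_sub, abs_mul, abs_of_nonneg h2,
    Real.mul_rpow h2 (abs_nonneg _),
    ENNReal.ofReal_mul (by positivity)]
  congr 2
  rw [Real.rpow_mul (by norm_num : (0:ℝ) ≤ 2), Real.rpow_natCast]


/-- For Borel probability measures `P, Q` on `ℝ` and `p ≥ 1`,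
`W_p^p(P,Q) ≤ ∑_m 2^{mp} [2^{p-1} |P(B_m)-Q(B_m)|
  + (P(B_m) ∧ Q(B_m)) W_p^p(𝓡_{B_m}P, 𝓡_{B_m}Q)]`. -/
theorem WpPow_le_annuli_decomposition (p : ℝ) (hp : 1 ≤ p)
    (P Q : Measure ℝ) [IsProbabilityMeasure P] [IsProbabilityMeasure Q] :
    WpPow p P Q ≤ ∑' m : ℕ, ENNReal.ofReal ((2 : ℝ) ^ ((m : ℝ) * p)) *
      (ENNReal.ofReal ((2 : ℝ) ^ (p - 1) *
          |(P (dyadicB m)).toReal - (Q (dyadicB m)).toReal|)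
        + (P (dyadicB m) ⊓ Q (dyadicB m)) *
            WpPow p (rescaledRestrict m P) (rescaledRestrict m Q)) := by
  classical
  have hp0 : (0:ℝ) ≤ p := zero_le_one.trans hp
  set K : ℕ → ℝ≥0∞ := fun m => ENNReal.ofReal ((2:ℝ) ^ ((m:ℝ) * p)) with hKdef
  set M : ℕ → ℝ≥0∞ := fun m => ENNReal.ofReal ((2:ℝ) ^ (p - 1) *
    |(P (dyadicB m)).toReal - (Q (dyadicB m)).toReal|) with hMdef
  set W : ℕ → ℝ≥0∞ := fun m =>
    WpPow p (rescaledRestrict m P) (rescaledRestrict m Q) with hWdef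
  set a : ℕ → ℝ≥0∞ := fun m => P (dyadicB m) with hadef
  set b : ℕ → ℝ≥0∞ := fun m => Q (dyadicB m) with hbdef
  set c : ℕ → ℝ≥0∞ := fun m => a m ⊓ b m with hcdef
  show WpPow p P Q ≤ ∑' m : ℕ, K m * (M m + c m * W m)
  -- basic facts
  have hafin : ∀ m, a m ≠ ∞ := fun m => (measure_lt_top P _).ne
  have hbfin : ∀ m, b m ≠ ∞ := fun m => (measure_lt_top Q _).ne
  have hca : ∀ m, c m ≤ a m := fun m => inf_le_left
  have hcb : ∀ m, c m ≤ b m := fun m => inf_le_right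
  have hcfin : ∀ m, c m ≠ ∞ := fun m => ((hca m).trans_lt (measure_lt_top P _)).ne
  have hKne0 : ∀ m, K m ≠ 0 := fun m => by
    simp only [hKdef, ne_eq, ENNReal.ofReal_eq_zero, not_le]
    positivity
  have hKfin : ∀ m, K m ≠ ∞ := fun m => ENNReal.ofReal_ne_top
  -- measures
  set μ : ℕ → Measure ℝ := fun m => (a m)⁻¹ • P.restrict (dyadicB m) with hμdef
  set ν : ℕ → Measure ℝ := fun m => (b m)⁻¹ • Q.restrict (dyadicB m) with hνdef
  have hresP : ∀ m, rescaledRestrict m P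
      = Measure.map (fun x => x / (2:ℝ)^m) (μ m) := fun m => rfl
  have hresQ : ∀ m, rescaledRestrict m Q
      = Measure.map (fun x => x / (2:ℝ)^m) (ν m) := fun m => rfl
  have hμsmul : ∀ m, a m • μ m = P.restrict (dyadicB m) := by
    intro m
    by_cases h : a m = 0
    · have h2 : P.restrict (dyadicB m) = 0 := Measure.restrict_eq_zero.mpr h
      simp [hμdef, h, h2]
    · rw [hμdef, smul_smul, ENNReal.mul_inv_cancel h (hafin m), one_smul]
  have hνsmul : ∀ m, b m • ν m = Q.restrict (dyadicB m) := by
    intro m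
    by_cases h : b m = 0
    · have h2 : Q.restrict (dyadicB m) = 0 := Measure.restrict_eq_zero.mpr h
      simp [hνdef, h, h2]
    · rw [hνdef, smul_smul, ENNReal.mul_inv_cancel h (hbfin m), one_smul]
  -- total masses
  have hsuma : ∑' m, a m = 1 := by
    rw [hadef, ← measure_iUnion pairwise_disjoint_dyadicB measurableSet_dyadicB,
      iUnion_dyadicB, measure_univ]
  have hsumb : ∑' m, b m = 1 := by
    rw [hbdef, ← measure_iUnion pairwise_disjoint_dyadicB measurableSet_dyadicB,
      iUnion_dyadicB, measure_univ]
  have hsumc_ne_top : ∑' m, c m ≠ ∞ := by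
    refine ne_top_of_le_ne_top ?_ (ENNReal.tsum_le_tsum hca)
    rw [hsuma]; exact one_ne_top
  set D : ℝ≥0∞ := 1 - ∑' m, c m with hDdef
  have hDle1 : D ≤ 1 := tsub_le_self
  have hDfin : D ≠ ∞ := ne_top_of_le_ne_top one_ne_top hDle1
  have hsum_ac : ∑' m, (a m - c m) = D := by
    rw [ENNReal.tsum_sub hsumc_ne_top hca, hsuma]
  have hsum_bc : ∑' m, (b m - c m) = D := by
    rw [ENNReal.tsum_sub hsumc_ne_top hcb, hsumb]
  -- mass mismatch identity
  have hMsplit : ∀ m, (a m - c m) + (b m - c m)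
      = ENNReal.ofReal |(a m).toReal - (b m).toReal| := by
    intro m
    rcases le_total (a m) (b m) with h | h
    · have hc : c m = a m := inf_eq_left.mpr h
      have ht : (a m).toReal ≤ (b m).toReal :=
        ENNReal.toReal_le_toReal (hafin m) (hbfin m) |>.mpr h
      rw [hc, tsub_self, zero_add, abs_of_nonpos (by linarith), neg_sub,
        ← ENNReal.ofReal_toReal (hbfin m), ← ENNReal.ofReal_toReal (hafin m),
        ← ENNReal.ofReal_sub _ (ENNReal.toReal_nonneg)]
      rw [ENNReal.ofReal_toReal (hbfin m), ENNReal.ofReal_toReal (hafin m)]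
    · have hc : c m = b m := inf_eq_right.mpr h
      have ht : (b m).toReal ≤ (a m).toReal :=
        ENNReal.toReal_le_toReal (hbfin m) (hafin m) |>.mpr h
      rw [hc, tsub_self, add_zero, abs_of_nonneg (by linarith),
        ← ENNReal.ofReal_toReal (hafin m), ← ENNReal.ofReal_toReal (hbfin m),
        ← ENNReal.ofReal_sub _ (ENNReal.toReal_nonneg)]
      rw [ENNReal.ofReal_toReal (hafin m), ENNReal.ofReal_toReal (hbfin m)]
  -- ε-argument
  refine ENNReal.le_of_forall_pos_le_add fun ε hε hfin => ?_
  obtain ⟨δ, hδpos, hδsum⟩ := ENNReal.exists_pos_sum_of_countable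
    (by exact_mod_cast hε.ne' : ((ε:ℝ≥0∞)) ≠ 0) ℕ
  have hTfin : ∀ m, K m * (M m + c m * W m) ≠ ∞ :=
    ENNReal.ne_top_of_tsum_ne_top hfin.ne
  have hcWfin : ∀ m, c m * W m ≠ ∞ := by
    intro m hcontra
    exact hTfin m (ENNReal.mul_eq_top.mpr (Or.inl ⟨hKne0 m,
      ENNReal.add_eq_top.mpr (Or.inr hcontra)⟩))
  -- choose near-optimal couplings
  have hchoice : ∀ m, ∃ ρ : Measure (ℝ × ℝ),
      (c m ≠ 0 → ρ.map Prod.fst = rescaledRestrict m P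
        ∧ ρ.map Prod.snd = rescaledRestrict m Q) ∧
      c m * (K m * ∫⁻ z, ENNReal.ofReal (|z.1 - z.2| ^ p) ∂ρ)
        ≤ K m * (c m * W m) + δ m := by
    intro m
    by_cases hc : c m = 0
    · exact ⟨0, fun h => absurd hc h, by simp [hc]⟩
    · have hW : W m ≠ ∞ := by
        intro hcontra
        exact hcWfin m (ENNReal.mul_eq_top.mpr (Or.inl ⟨hc, hcontra⟩))
      have hcKfin : c m * K m ≠ ∞ := ENNReal.mul_ne_top (hcfin m) (hKfin m)
      set η : ℝ≥0∞ := (δ m : ℝ≥0∞) / (c m * K m) with hηdef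
      have hη : η ≠ 0 := by
        rw [hηdef]
        simp only [ne_eq, ENNReal.div_eq_zero_iff, not_or]
        exact ⟨by exact_mod_cast (hδpos m).ne', hcKfin⟩
      have hlt : WpPow p (rescaledRestrict m P) (rescaledRestrict m Q) < W m + η :=
        lt_add_right hW hη
      simp only [WpPow, iInf_lt_iff] at hlt
      obtain ⟨ρ, h1, h2, hcost⟩ := hlt
      refine ⟨ρ, fun _ => ⟨h1, h2⟩, ?_⟩
      calc c m * (K m * ∫⁻ z, ENNReal.ofReal (|z.1 - z.2| ^ p) ∂ρ)
          ≤ c m * (K m * (W m + η)) :=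
            mul_le_mul_right (mul_le_mul_right hcost.le _) _
        _ = K m * (c m * W m) + (c m * K m) * η := by ring
        _ ≤ K m * (c m * W m) + (δ m : ℝ≥0∞) := by
            refine add_le_add_right ?_ _
            rw [hηdef]
            exact ENNReal.mul_div_le
  choose ρ hρmar hρcost using hchoice
  -- scaling maps
  set s : ℕ → ℝ × ℝ → ℝ × ℝ := fun m z => ((2:ℝ)^m * z.1, (2:ℝ)^m * z.2) with hsdef
  have hs : ∀ m, Measurable (s m) := fun m =>
    ((measurable_const_mul _).comp measurable_fst).prodMk
      ((measurable_const_mul _).comp measurable_snd)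
  have hback : ∀ m : ℕ, ((fun x : ℝ => (2:ℝ)^m * x) ∘ (fun x : ℝ => x / (2:ℝ)^m)) = id := by
    intro m
    funext x
    simp only [Function.comp_apply, id_eq]
    field_simp
  have hdiv : ∀ m : ℕ, Measurable (fun x : ℝ => x / (2:ℝ)^m) := fun m =>
    measurable_id.div_const _
  have hfstρ : ∀ m, c m ≠ 0 → (Measure.map (s m) (ρ m)).map Prod.fst = μ m := by
    intro m hc
    rw [Measure.map_map measurable_fst (hs m)]
    have hcomp : (Prod.fst ∘ s m) = (fun x : ℝ => (2:ℝ)^m * x) ∘ Prod.fst := rfl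
    rw [hcomp, ← Measure.map_map (measurable_const_mul _) measurable_fst,
      (hρmar m hc).1, hresP,
      Measure.map_map (measurable_const_mul _) (hdiv m),
      hback, Measure.map_id]
  have hsndρ : ∀ m, c m ≠ 0 → (Measure.map (s m) (ρ m)).map Prod.snd = ν m := by
    intro m hc
    rw [Measure.map_map measurable_snd (hs m)]
    have hcomp : (Prod.snd ∘ s m) = (fun x : ℝ => (2:ℝ)^m * x) ∘ Prod.snd := rfl
    rw [hcomp, ← Measure.map_map (measurable_const_mul _) measurable_snd,
      (hρmar m hc).2, hresQ,
      Measure.map_map (measurable_const_mul _) (hdiv m),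
      hback, Measure.map_id]
  -- the coupling
  set πmatch : Measure (ℝ × ℝ) :=
    Measure.sum (fun m => c m • Measure.map (s m) (ρ m)) with hπmatchdef
  set Pl : Measure ℝ := Measure.sum (fun m => (a m - c m) • μ m) with hPldef
  set Ql : Measure ℝ := Measure.sum (fun m => (b m - c m) • ν m) with hQldef
  have hPl_univ : Pl Set.univ = D := by
    rw [hPldef, Measure.sum_apply _ MeasurableSet.univ, ← hsum_ac]
    refine tsum_congr fun m => ?_
    rw [Measure.smul_apply, hμdef, Measure.smul_apply, Measure.restrict_apply_univ,
      smul_eq_mul, smul_eq_mul]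
    by_cases h : a m = 0
    · have h0 : a m - c m = 0 := by rw [h]; exact zero_tsub _
      rw [h0]; simp
    · rw [ENNReal.inv_mul_cancel h (hafin m), mul_one]
  have hQl_univ : Ql Set.univ = D := by
    rw [hQldef, Measure.sum_apply _ MeasurableSet.univ, ← hsum_bc]
    refine tsum_congr fun m => ?_
    rw [Measure.smul_apply, hνdef, Measure.smul_apply, Measure.restrict_apply_univ,
      smul_eq_mul, smul_eq_mul]
    by_cases h : b m = 0
    · have h0 : b m - c m = 0 := by rw [h]; exact zero_tsub _
      rw [h0]; simp
    · rw [ENNReal.inv_mul_cancel h (hbfin m), mul_one]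
  haveI hPlfin : IsFiniteMeasure Pl :=
    ⟨by rw [hPl_univ]; exact lt_of_le_of_lt hDle1 one_lt_top⟩
  haveI hQlfin : IsFiniteMeasure Ql :=
    ⟨by rw [hQl_univ]; exact lt_of_le_of_lt hDle1 one_lt_top⟩
  set πmis : Measure (ℝ × ℝ) := D⁻¹ • (Pl.prod Ql) with hπmisdef
  set πtot : Measure (ℝ × ℝ) := πmatch + πmis with hπtotdef
  -- marginals
  have hmatch_fst : πmatch.map Prod.fst = Measure.sum (fun m => c m • μ m) := by
    rw [hπmatchdef, Measure.map_sum measurable_fst.aemeasurable]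
    congr 1
    funext m
    rw [Measure.map_smul]
    by_cases hc : c m = 0
    · simp [hc]
    · rw [hfstρ m hc]
  have hmatch_snd : πmatch.map Prod.snd = Measure.sum (fun m => c m • ν m) := by
    rw [hπmatchdef, Measure.map_sum measurable_snd.aemeasurable]
    congr 1
    funext m
    rw [Measure.map_smul]
    by_cases hc : c m = 0
    · simp [hc]
    · rw [hsndρ m hc]
  have hDcancel : ∀ κ : Measure ℝ, κ Set.univ = D → (D⁻¹ * D) • κ = κ := by
    intro κ hκ
    by_cases hD : D = 0
    · have : κ = 0 := Measure.measure_univ_eq_zero.mp (by rw [hκ, hD])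
      simp [this]
    · rw [ENNReal.inv_mul_cancel hD hDfin, one_smul]
  have hmis_fst : πmis.map Prod.fst = Pl := by
    rw [hπmisdef, Measure.map_smul, Measure.map_fst_prod, hQl_univ, smul_smul]
    exact hDcancel Pl hPl_univ
  have hmis_snd : πmis.map Prod.snd = Ql := by
    rw [hπmisdef, Measure.map_smul, Measure.map_snd_prod, hPl_univ, smul_smul]
    exact hDcancel Ql hQl_univ
  have htot_fst : πtot.map Prod.fst = P := by
    rw [hπtotdef, Measure.map_add _ _ measurable_fst, hmatch_fst, hmis_fst, hPldef,
      Measure.sum_add_sum]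
    have heq : (fun m => c m • μ m + (a m - c m) • μ m)
        = fun m => P.restrict (dyadicB m) := by
      funext m
      rw [← add_smul, add_tsub_cancel_of_le (hca m), hμsmul]
    rw [heq, ← Measure.restrict_iUnion pairwise_disjoint_dyadicB measurableSet_dyadicB,
      iUnion_dyadicB, Measure.restrict_univ]
  have htot_snd : πtot.map Prod.snd = Q := by
    rw [hπtotdef, Measure.map_add _ _ measurable_snd, hmatch_snd, hmis_snd, hQldef,
      Measure.sum_add_sum]
    have heq : (fun m => c m • ν m + (b m - c m) • ν m)
        = fun m => Q.restrict (dyadicB m) := by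
      funext m
      rw [← add_smul, add_tsub_cancel_of_le (hcb m), hνsmul]
    rw [heq, ← Measure.restrict_iUnion pairwise_disjoint_dyadicB measurableSet_dyadicB,
      iUnion_dyadicB, Measure.restrict_univ]
  refine (WpPow_le_coupling p πtot htot_fst htot_snd).trans ?_
  rw [hπtotdef, lintegral_add_measure]
  -- bound on matched part
  have hmatch_cost : ∫⁻ z, ENNReal.ofReal (|z.1 - z.2| ^ p) ∂πmatch
      ≤ ∑' m, K m * (c m * W m) + ε := by
    rw [hπmatchdef, lintegral_sum_measure]
    have h1 : ∀ m, ∫⁻ z, ENNReal.ofReal (|z.1 - z.2| ^ p)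
        ∂(c m • Measure.map (s m) (ρ m))
        = c m * (K m * ∫⁻ z, ENNReal.ofReal (|z.1 - z.2| ^ p) ∂(ρ m)) := by
      intro m
      rw [lintegral_smul_measure, lintegral_map (measurable_cost hp0) (hs m)]
      congr 1
      rw [← lintegral_const_mul (K m) (measurable_cost hp0)]
      exact lintegral_congr fun z => cost_scale hp m z.1 z.2
    calc ∑' m, ∫⁻ z, ENNReal.ofReal (|z.1 - z.2| ^ p) ∂(c m • Measure.map (s m) (ρ m))
        = ∑' m, c m * (K m * ∫⁻ z, ENNReal.ofReal (|z.1 - z.2| ^ p) ∂(ρ m)) :=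
          tsum_congr h1
      _ ≤ ∑' m, (K m * (c m * W m) + δ m) := ENNReal.tsum_le_tsum hρcost
      _ = ∑' m, K m * (c m * W m) + ∑' m, (δ m : ℝ≥0∞) := ENNReal.tsum_add
      _ ≤ ∑' m, K m * (c m * W m) + ε := add_le_add_right hδsum.le _
  -- bound on mismatched part
  have habs_meas : Measurable fun x : ℝ => ENNReal.ofReal (|x| ^ p) :=
    ((continuous_abs.rpow_const (fun _ => Or.inr hp0)).measurable).ennreal_ofReal
  have hKbound : ∀ m, ∫⁻ x in dyadicB m, ENNReal.ofReal (|x| ^ p) ∂P ≤ K m * a m := by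
    intro m
    calc ∫⁻ x in dyadicB m, ENNReal.ofReal (|x| ^ p) ∂P
        ≤ ∫⁻ _ in dyadicB m, K m ∂P := by
          refine setLIntegral_mono measurable_const fun x hx => ?_
          refine ENNReal.ofReal_le_ofReal ?_
          rw [Real.rpow_mul (by norm_num : (0:ℝ) ≤ 2), Real.rpow_natCast]
          exact Real.rpow_le_rpow (abs_nonneg _) (abs_le_of_mem_dyadicB hx) hp0
      _ = K m * a m := by rw [setLIntegral_const]
  have hKboundQ : ∀ m, ∫⁻ x in dyadicB m, ENNReal.ofReal (|x| ^ p) ∂Q ≤ K m * b m := by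
    intro m
    calc ∫⁻ x in dyadicB m, ENNReal.ofReal (|x| ^ p) ∂Q
        ≤ ∫⁻ _ in dyadicB m, K m ∂Q := by
          refine setLIntegral_mono measurable_const fun x hx => ?_
          refine ENNReal.ofReal_le_ofReal ?_
          rw [Real.rpow_mul (by norm_num : (0:ℝ) ≤ 2), Real.rpow_natCast]
          exact Real.rpow_le_rpow (abs_nonneg _) (abs_le_of_mem_dyadicB hx) hp0
      _ = K m * b m := by rw [setLIntegral_const]
  have hX : ∫⁻ x, ENNReal.ofReal (|x| ^ p) ∂Pl ≤ ∑' m, (a m - c m) * K m := by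
    rw [hPldef, lintegral_sum_measure]
    refine ENNReal.tsum_le_tsum fun m => ?_
    rw [lintegral_smul_measure, hμdef, lintegral_smul_measure]
    calc (a m - c m) * ((a m)⁻¹ * ∫⁻ x in dyadicB m, ENNReal.ofReal (|x| ^ p) ∂P)
        ≤ (a m - c m) * ((a m)⁻¹ * (K m * a m)) := by gcongr; exact hKbound m
      _ = (a m - c m) * (K m * ((a m)⁻¹ * a m)) := by ring
      _ ≤ (a m - c m) * (K m * 1) := by gcongr; exact ENNReal.inv_mul_le_one _
      _ = (a m - c m) * K m := by rw [mul_one]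
  have hY : ∫⁻ x, ENNReal.ofReal (|x| ^ p) ∂Ql ≤ ∑' m, (b m - c m) * K m := by
    rw [hQldef, lintegral_sum_measure]
    refine ENNReal.tsum_le_tsum fun m => ?_
    rw [lintegral_smul_measure, hνdef, lintegral_smul_measure]
    calc (b m - c m) * ((b m)⁻¹ * ∫⁻ x in dyadicB m, ENNReal.ofReal (|x| ^ p) ∂Q)
        ≤ (b m - c m) * ((b m)⁻¹ * (K m * b m)) := by gcongr; exact hKboundQ m
      _ = (b m - c m) * (K m * ((b m)⁻¹ * b m)) := by ring
      _ ≤ (b m - c m) * (K m * 1) := by gcongr; exact ENNReal.inv_mul_le_one _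
      _ = (b m - c m) * K m := by rw [mul_one]
  set E : ℝ≥0∞ := ENNReal.ofReal ((2:ℝ) ^ (p - 1)) with hEdef
  have hMeq : ∀ m, M m = E * ENNReal.ofReal |(a m).toReal - (b m).toReal| := fun m =>
    ENNReal.ofReal_mul (by positivity : (0:ℝ) ≤ (2:ℝ) ^ (p - 1))
  have hm1 : Measurable fun z : ℝ × ℝ => ENNReal.ofReal (|z.1| ^ p) :=
    habs_meas.comp measurable_fst
  have hm2 : Measurable fun z : ℝ × ℝ => ENNReal.ofReal (|z.2| ^ p) :=
    habs_meas.comp measurable_snd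
  have hfst_int : ∫⁻ z : ℝ × ℝ, ENNReal.ofReal (|z.1| ^ p) ∂(Pl.prod Ql)
      = D * ∫⁻ x, ENNReal.ofReal (|x| ^ p) ∂Pl := by
    rw [← lintegral_map habs_meas measurable_fst, Measure.map_fst_prod, hQl_univ,
      lintegral_smul_measure, smul_eq_mul]
  have hsnd_int : ∫⁻ z : ℝ × ℝ, ENNReal.ofReal (|z.2| ^ p) ∂(Pl.prod Ql)
      = D * ∫⁻ x, ENNReal.ofReal (|x| ^ p) ∂Ql := by
    rw [← lintegral_map habs_meas measurable_snd, Measure.map_snd_prod, hPl_univ,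
      lintegral_smul_measure, smul_eq_mul]
  have hmis_cost : ∫⁻ z, ENNReal.ofReal (|z.1 - z.2| ^ p) ∂πmis
      ≤ ∑' m, K m * M m := by
    rw [hπmisdef, lintegral_smul_measure]
    have hXY : ∫⁻ z, ENNReal.ofReal (|z.1 - z.2| ^ p) ∂(Pl.prod Ql)
        ≤ D * (E * ((∑' m, (a m - c m) * K m) + (∑' m, (b m - c m) * K m))) := by
      calc ∫⁻ z, ENNReal.ofReal (|z.1 - z.2| ^ p) ∂(Pl.prod Ql)
          ≤ ∫⁻ z : ℝ × ℝ, E * (ENNReal.ofReal (|z.1| ^ p) + ENNReal.ofReal (|z.2| ^ p))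
              ∂(Pl.prod Ql) :=
            lintegral_mono fun z => cost_pointwise_le hp z.1 z.2
        _ = E * ((∫⁻ z : ℝ × ℝ, ENNReal.ofReal (|z.1| ^ p) ∂(Pl.prod Ql))
            + (∫⁻ z : ℝ × ℝ, ENNReal.ofReal (|z.2| ^ p) ∂(Pl.prod Ql))) := by
            rw [lintegral_const_mul E (by exact hm1.add hm2), lintegral_add_left hm1]
        _ = E * (D * (∫⁻ x, ENNReal.ofReal (|x| ^ p) ∂Pl)
            + D * (∫⁻ x, ENNReal.ofReal (|x| ^ p) ∂Ql)) := by rw [hfst_int, hsnd_int]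
        _ ≤ E * (D * (∑' m, (a m - c m) * K m) + D * (∑' m, (b m - c m) * K m)) := by
            gcongr
        _ = D * (E * ((∑' m, (a m - c m) * K m) + (∑' m, (b m - c m) * K m))) := by ring
    calc D⁻¹ * ∫⁻ z, ENNReal.ofReal (|z.1 - z.2| ^ p) ∂(Pl.prod Ql)
        ≤ D⁻¹ * (D * (E * ((∑' m, (a m - c m) * K m) + (∑' m, (b m - c m) * K m)))) := by
          gcongr
      _ = (D⁻¹ * D) * (E * ((∑' m, (a m - c m) * K m) + (∑' m, (b m - c m) * K m))) := by
          ring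
      _ ≤ 1 * (E * ((∑' m, (a m - c m) * K m) + (∑' m, (b m - c m) * K m))) := by
          gcongr; exact ENNReal.inv_mul_le_one D
      _ = E * ((∑' m, (a m - c m) * K m) + (∑' m, (b m - c m) * K m)) := one_mul _
      _ = ∑' m, K m * M m := by
          rw [← ENNReal.tsum_add, ← ENNReal.tsum_mul_left]
          refine tsum_congr fun m => ?_
          rw [← add_mul, hMsplit m, hMeq m]
          ring
  calc (∫⁻ z, ENNReal.ofReal (|z.1 - z.2| ^ p) ∂πmatch)
        + ∫⁻ z, ENNReal.ofReal (|z.1 - z.2| ^ p) ∂πmis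
      ≤ (∑' m, K m * (c m * W m) + ε) + ∑' m, K m * M m :=
        add_le_add hmatch_cost hmis_cost
    _ = ((∑' m, K m * M m) + ∑' m, K m * (c m * W m)) + ε := by ring
    _ = (∑' m, (K m * M m + K m * (c m * W m))) + ε := by rw [ENNReal.tsum_add]
    _ = (∑' m, K m * (M m + c m * W m)) + ε := by
        congr 1
        exact tsum_congr fun m => (mul_add _ _ _).symm
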